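/- Let m ≠ 0 and suppose gcd(a₁, ..., aₙ, m) divides b. The solution set S ⊆ (ℤ/mℤ)ⁿ of a₁x₁ + ... + aₙxₙ ≡ b (mod m) is a disjoint union of exactly P₁/P₂ orbits under translation by the subgroup A generated by the images of Vᵢ = (0,...,0, m/gcd(aᵢ,m), 0,...,0), where P₁ = |gcd(a₁,...,aₙ,m)|·|m|^(n-1) and P₂ = ∏ᵢ |gcd(aᵢ, m)|; each orbit has exactly P₂ elements. -/

import Mathlib

open AddSubgroup

lemma aux_card_pi {ι : Type*} [Fintype ι] {G : ι → Type*} [∀ i, AddGroup (G i)]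
    (H : ∀ i, AddSubgroup (G i)) :
    Nat.card (AddSubgroup.pi Set.univ H) = ∏ i, Nat.card (H i) := by
  rw [← Nat.card_pi]
  exact Nat.card_congr
    ⟨fun x i => ⟨x.1 i, x.2 i (Set.mem_univ i)⟩,
     fun f => ⟨fun i => f i, fun i _ => (f i).2⟩, fun x => rfl, fun f => rfl⟩

lemma aux_closure_single {ι : Type*} [Fintype ι] [DecidableEq ι] {G : ι → Type*}
    [∀ i, AddCommGroup (G i)] (v : ∀ i, G i) :
    AddSubgroup.closure (Set.range fun i => Pi.single i (v i)) =
      AddSubgroup.pi Set.univ fun i => AddSubgroup.zmultiples (v i) := by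
  apply le_antisymm
  · rw [AddSubgroup.closure_le]
    rintro _ ⟨i, rfl⟩ j _
    by_cases h : j = i
    · subst h
      simpa using AddSubgroup.mem_zmultiples (v j)
    · simp [Pi.single_eq_of_ne h, AddSubgroup.zero_mem]
  · intro x hx
    have hx' : x = ∑ i, Pi.single i (x i) := (Finset.univ_sum_single x).symm
    rw [hx']
    refine AddSubgroup.sum_mem _ fun i _ => ?_
    obtain ⟨k, hk⟩ := AddSubgroup.mem_zmultiples_iff.mp (hx i (Set.mem_univ i))
    have h2 : Pi.single i (x i) = k • Pi.single i (v i) := by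
      rw [← hk, ← Pi.single_smul]
    rw [h2]
    exact AddSubgroup.zsmul_mem _ (AddSubgroup.subset_closure (Set.mem_range_self i)) k

lemma aux_addOrderOf_intCast (M : ℕ) (hM : M ≠ 0) (x : ℤ) :
    addOrderOf ((x : ZMod M)) = M / Nat.gcd M x.natAbs := by
  rcases Int.natAbs_eq x with h | h
  · rw [h, Int.cast_natCast]
    exact ZMod.addOrderOf_coe _ hM
  · rw [h, Int.cast_neg, Int.cast_natCast, addOrderOf_neg]
    simp only [Int.natAbs_neg, Int.natAbs_natCast]
    exact ZMod.addOrderOf_coe _ hM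

theorem stmt_14 (n : ℕ) (hn : 1 ≤ n) (a : Fin n → ℤ) (b m : ℤ) (hm : m ≠ 0)
    (hd : (Int.gcd (Finset.univ.gcd a) m : ℤ) ∣ b)
    (S : Set (Fin n → ZMod m.natAbs))
    (hS : S = {x | ∑ i, (a i : ZMod m.natAbs) * x i = (b : ZMod m.natAbs)})
    (A : AddSubgroup (Fin n → ZMod m.natAbs))
    (hA : A = AddSubgroup.closure
        (Set.range fun i : Fin n =>
          (Pi.single i ((m / Int.gcd (a i) m : ℤ) : ZMod m.natAbs) : Fin n → ZMod m.natAbs))) :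
    ((QuotientAddGroup.mk (s := A)) '' S).ncard
        = (Int.gcd (Finset.univ.gcd a) m * m.natAbs ^ (n - 1)) / ∏ i, Int.gcd (a i) m ∧
    ∀ X ∈ S, ((fun v => X + v) '' (A : Set (Fin n → ZMod m.natAbs))).ncard
        = ∏ i, Int.gcd (a i) m := by
  have hM : m.natAbs ≠ 0 := Int.natAbs_ne_zero.mpr hm
  haveI : NeZero m.natAbs := ⟨hM⟩
  set g : ℤ := Finset.univ.gcd a with hg
  set d : ℕ := Int.gcd g m with hdd
  set v : Fin n → ZMod m.natAbs := fun i => ((m / Int.gcd (a i) m : ℤ) : ZMod m.natAbs) with hv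
  -- basic divisibilities
  have hgipos : ∀ i, 0 < Int.gcd (a i) m := fun i => Int.gcd_pos_of_ne_zero_right _ hm
  have hgidvd : ∀ i, ((Int.gcd (a i) m : ℤ)) ∣ m := fun i => Int.gcd_dvd_right _ _
  have hgidvdM : ∀ i, Int.gcd (a i) m ∣ m.natAbs := fun i => Nat.gcd_dvd_right _ _
  have hddvdM : d ∣ m.natAbs := Nat.gcd_dvd_right _ _
  have hdpos : 0 < d := Int.gcd_pos_of_ne_zero_right _ hm
  -- order of v i
  have hord : ∀ i, addOrderOf (v i) = Int.gcd (a i) m := by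
    intro i
    rw [hv, aux_addOrderOf_intCast m.natAbs hM]
    rw [Int.natAbs_ediv_of_dvd (hgidvd i), Int.natAbs_natCast]
    rw [Nat.gcd_comm, Nat.gcd_eq_left (Nat.div_dvd_of_dvd (hgidvdM i))]
    exact Nat.div_div_self (hgidvdM i) hM
  -- structure and cardinality of A
  have hApi : A = AddSubgroup.pi Set.univ fun i => AddSubgroup.zmultiples (v i) := by
    rw [hA]; exact aux_closure_single v
  have hcardA : Nat.card A = ∏ i, Int.gcd (a i) m := by
    rw [hApi, aux_card_pi]
    exact Finset.prod_congr rfl fun i _ => by rw [Nat.card_zmultiples, hord i]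
  have hcardApos : 0 < Nat.card A := by
    rw [hcardA]
    exact Finset.prod_pos fun i _ => hgipos i
  -- the homomorphism
  set φ : (Fin n → ZMod m.natAbs) →+ ZMod m.natAbs :=
    { toFun := fun x => ∑ i, (a i : ZMod m.natAbs) * x i
      map_zero' := by simp
      map_add' := by intro x y; simp [mul_add, Finset.sum_add_distrib] } with hφ
  have hφapp : ∀ x, φ x = ∑ i, (a i : ZMod m.natAbs) * x i := fun _ => rfl
  -- A is contained in the kernel of φ
  have hker : A ≤ φ.ker := by
    rw [hA, AddSubgroup.closure_le]
    rintro _ ⟨i, rfl⟩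
    have h1 : φ (Pi.single i (v i)) = (a i : ZMod m.natAbs) * v i := by
      rw [hφapp]
      rw [Finset.sum_eq_single i (fun j _ hj => by rw [Pi.single_eq_of_ne hj, mul_zero])
        (fun h => absurd (Finset.mem_univ i) h)]
      rw [Pi.single_eq_same]
    have h2 : (a i : ZMod m.natAbs) * v i = 0 := by
      rw [hv]
      have he : (a i : ZMod m.natAbs) * ((m / (Int.gcd (a i) m : ℤ) : ℤ) : ZMod m.natAbs)
          = ((a i * (m / (Int.gcd (a i) m : ℤ)) : ℤ) : ZMod m.natAbs) := by push_cast; ring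
      rw [he, ZMod.intCast_zmod_eq_zero_iff_dvd, Int.natAbs_dvd]
      refine ⟨a i / (Int.gcd (a i) m : ℤ), ?_⟩
      rw [← Int.mul_ediv_assoc _ (hgidvd i), ← Int.mul_ediv_assoc _ (Int.gcd_dvd_left _ _),
        mul_comm]
    exact AddMonoidHom.mem_ker.mpr (h1.trans h2)
  -- the range of φ
  have hrange : φ.range = AddSubgroup.zmultiples ((g : ZMod m.natAbs)) := by
    apply le_antisymm
    · rintro _ ⟨x, rfl⟩
      rw [hφapp]
      refine AddSubgroup.sum_mem _ fun i _ => ?_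
      obtain ⟨c, hc⟩ : g ∣ a i := Finset.gcd_dvd (Finset.mem_univ i)
      obtain ⟨k, hk⟩ := ZMod.intCast_surjective ((c : ZMod m.natAbs) * x i)
      refine AddSubgroup.mem_zmultiples_iff.mpr ⟨k, ?_⟩
      rw [zsmul_eq_mul, hk, hc]
      push_cast
      ring
    · obtain ⟨z, hz⟩ := Submodule.IsPrincipal.principal (Ideal.span (Set.range a))
      have hz' : Ideal.span (Set.range a) = Ideal.span {z} := hz
      have hzdvd : ∀ i, z ∣ a i := fun i =>
        Ideal.mem_span_singleton.mp (hz' ▸ Ideal.subset_span (Set.mem_range_self i))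
      have hzg : z ∣ g := Finset.dvd_gcd fun i _ => hzdvd i
      have hgmem : g ∈ Ideal.span (Set.range a) := hz' ▸ Ideal.mem_span_singleton.mpr hzg
      have hgmem2 := Ideal.mem_map_of_mem (Int.castRingHom (ZMod m.natAbs)) hgmem
      rw [Ideal.map_span, ← Set.range_comp] at hgmem2
      obtain ⟨c, hc⟩ := (Submodule.mem_span_range_iff_exists_fun _).mp hgmem2
      simp only [Function.comp_apply, Int.coe_castRingHom, smul_eq_mul] at hc
      refine AddSubgroup.zmultiples_le_of_mem ⟨fun i => c i, ?_⟩
      rw [hφapp, ← hc]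
      exact Finset.sum_congr rfl fun i _ => mul_comm _ _
  have hcardrange : Nat.card φ.range = m.natAbs / d := by
    rw [hrange, Nat.card_zmultiples, aux_addOrderOf_intCast m.natAbs hM, hdd, Int.gcd]
    rw [Nat.gcd_comm]
  -- cardinality of the kernel
  have hcardG : m.natAbs ^ n = Nat.card φ.ker * (m.natAbs / d) := by
    have e1 : Nat.card (Fin n → ZMod m.natAbs) = m.natAbs ^ n := by
      simp [Nat.card_pi, Nat.card_zmod]
    have e2 := AddSubgroup.card_eq_card_quotient_mul_card_addSubgroup φ.ker
    rw [Nat.card_congr (QuotientAddGroup.quotientKerEquivRange φ).toEquiv, hcardrange, e1] at e2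
    rw [e2, mul_comm]
  have hcardker : Nat.card φ.ker = d * m.natAbs ^ (n - 1) := by
    have hMdpos : 0 < m.natAbs / d :=
      Nat.div_pos (Nat.le_of_dvd (Nat.pos_of_ne_zero hM) hddvdM) hdpos
    apply Nat.eq_of_mul_eq_mul_right hMdpos
    rw [← hcardG, mul_comm d, mul_assoc, Nat.mul_div_cancel' hddvdM, ← pow_succ,
      Nat.sub_add_cancel hn]
  -- S is the fiber of φ over b
  have hSfib : S = φ ⁻¹' {(b : ZMod m.natAbs)} := by
    rw [hS]; ext x; simp [hφapp]
  have hbmem : (b : ZMod m.natAbs) ∈ φ.range := by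
    rw [hrange]
    obtain ⟨c, hc⟩ := hd
    have hb2 : b = g * (Int.gcdA g m * c) + m * (Int.gcdB g m * c) := by
      rw [hc, hdd, Int.gcd_eq_gcd_ab]; ring
    have hm0 : ((m : ℤ) : ZMod m.natAbs) = 0 := by
      rw [ZMod.intCast_zmod_eq_zero_iff_dvd]
      exact Int.natAbs_dvd.mpr dvd_rfl
    refine AddSubgroup.mem_zmultiples_iff.mpr ⟨Int.gcdA g m * c, ?_⟩
    rw [zsmul_eq_mul, hb2]
    push_cast
    rw [hm0]
    ring
  have hcardS : Nat.card S = d * m.natAbs ^ (n - 1) := by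
    obtain ⟨x₀, hx₀⟩ := hbmem
    rw [hSfib, ← hx₀, Nat.card_congr (φ.fiberEquivKer x₀), hcardker]
  -- S is a union of cosets of A
  have hpre : (QuotientAddGroup.mk (s := A)) ⁻¹' ((QuotientAddGroup.mk (s := A)) '' S) = S := by
    apply Set.Subset.antisymm _ (Set.subset_preimage_image _ _)
    rintro x ⟨y, hyS, hy⟩
    have hmem : -y + x ∈ A := (QuotientAddGroup.eq).mp hy
    have heq : φ x = φ y := by
      have h0 : φ (-y + x) = 0 := AddMonoidHom.mem_ker.mp (hker hmem)
      have h3 := φ.map_add (-y) x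
      rw [h0, φ.map_neg] at h3
      linear_combination (norm := abel) -h3
    rw [hSfib] at hyS ⊢
    simp only [Set.mem_preimage, Set.mem_singleton_iff] at hyS ⊢
    rw [heq, hyS]
  have hcardST : Nat.card S
      = Nat.card A * Nat.card ((QuotientAddGroup.mk (s := A)) '' S) := by
    conv_lhs => rw [← hpre]
    rw [Nat.card_congr (QuotientAddGroup.preimageMkEquivAddSubgroupProdSet A _),
      Nat.card_prod]
  constructor
  · rw [← Nat.card_coe_set_eq, ← hcardS, hcardST, ← hcardA,
      Nat.mul_div_cancel_left _ hcardApos]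
  · intro X hX
    rw [Set.ncard_image_of_injective _ (add_right_injective X), ← Nat.card_coe_set_eq,
      ← hcardA]
    rfl
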